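/- Let $Z_1, Z_2, Z_3$ be mutually independent standard normal random variables, let $c, c' \in \mathbb{R}$ be constants, and define $Q(w) = P(\sqrt{w}\, Z_1 + \sqrt{1-w}\, Z_2 > c \mid Z_1 \le Z_3 + c')$ for $w \in (0,1)$. Then $Q$ is a monotonically decreasing function of $w$ on $(0,1)$. -/

import Mathlib

open MeasureTheory ProbabilityTheory Set Real

namespace QAux

lemma pdf_symm {a b : ℝ} (hb : 0 < b) (hab : a^2 + b^2 = 1) (x y : ℝ) :
    gaussianPDFReal 0 1 x * gaussianPDFReal (a*x) (NNReal.mk (b^2) (sq_nonneg b)) y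
      = gaussianPDFReal 0 1 y * gaussianPDFReal (a*y) (NNReal.mk (b^2) (sq_nonneg b)) x := by
  simp only [gaussianPDFReal]
  rw [mul_mul_mul_comm, ← Real.exp_add, mul_mul_mul_comm, ← Real.exp_add]
  congr 1
  simp only [NNReal.coe_mk, NNReal.coe_one]
  have hbne : b ≠ 0 := hb.ne'
  field_simp
  ring_nf
  congr 1
  rw [show a^2 = 1 - b^2 by linarith]
  field_simp
  ring

end QAux

namespace QAux2
open QAux

lemma gauss_map_affine (a b m : ℝ) :
    (gaussianReal 0 1).map (fun y => m + b*y)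
      = gaussianReal m (NNReal.mk (b^2) (sq_nonneg b)) := by
  have h1 : (fun y => m + b*y) = (fun z => z + m) ∘ (fun y => b*y) := by
    funext y; simp [add_comm]
  rw [h1, ← Measure.map_map (measurable_add_const m) (measurable_const_mul b)]
  have h2 : (fun y => b*y) = (b * ·) := rfl
  rw [h2, gaussianReal_map_const_mul b, gaussianReal_map_add_const m]
  simp

lemma gauss_halfplane (a b x c : ℝ) (hb : 0 < b) :
    gaussianReal 0 1 (Ioi ((c - a*x)/b)) = gaussianReal (a*x) (NNReal.mk (b^2) (sq_nonneg b)) (Ioi c) := by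
  rw [← gauss_map_affine a b (a*x),
    Measure.map_apply (by fun_prop) measurableSet_Ioi]
  congr 1
  ext y
  simp only [mem_preimage, mem_Ioi, mem_setOf_eq]
  rw [div_lt_iff₀ hb]
  constructor <;> intro h <;> nlinarith

lemma lintegral_gauss_smooth {a b : ℝ} (hb : 0 < b) (hab : a^2 + b^2 = 1)
    {s : Set ℝ} (hs : MeasurableSet s) :
    ∫⁻ x, gaussianReal (a*x) (NNReal.mk (b^2) (sq_nonneg b)) s ∂(gaussianReal 0 1)
      = gaussianReal 0 1 s := by
  have hv : (NNReal.mk (b^2) (sq_nonneg b) : NNReal) ≠ 0 := by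
    rw [← NNReal.coe_ne_zero, NNReal.coe_mk]; positivity
  have hpdfm : Measurable (fun p : ℝ × ℝ =>
      gaussianPDF 0 1 p.1 * gaussianPDF (a*p.1) (NNReal.mk (b^2) (sq_nonneg b)) p.2) := by
    simp only [gaussianPDF, gaussianPDFReal]
    fun_prop
  have hm : Measurable (fun x => gaussianReal (a*x) (NNReal.mk (b^2) (sq_nonneg b)) s) := by
    simp_rw [gaussianReal_apply _ hv s]
    simp only [gaussianPDF, gaussianPDFReal]
    apply Measurable.lintegral_prod_right
    fun_prop
  rw [gaussianReal_of_var_ne_zero 0 one_ne_zero,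
    lintegral_withDensity_eq_lintegral_mul _ (measurable_gaussianPDF 0 1) hm]
  simp only [Pi.mul_apply]
  calc ∫⁻ x, gaussianPDF 0 1 x * gaussianReal (a*x) (NNReal.mk (b^2) (sq_nonneg b)) s
      = ∫⁻ x, ∫⁻ y in s, gaussianPDF 0 1 x * gaussianPDF (a*x) (NNReal.mk (b^2) (sq_nonneg b)) y := by
        congr 1; funext x
        rw [gaussianReal_apply _ hv s, lintegral_const_mul _ (measurable_gaussianPDF _ _)]
    _ = ∫⁻ y in s, ∫⁻ x, gaussianPDF 0 1 x * gaussianPDF (a*x) (NNReal.mk (b^2) (sq_nonneg b)) y := by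
        apply lintegral_lintegral_swap
        exact hpdfm.aemeasurable
    _ = ∫⁻ y in s, gaussianPDF 0 1 y := by
        apply setLIntegral_congr_fun hs
        intro y _
        have hpt : ∀ x, gaussianPDF 0 1 x * gaussianPDF (a*x) (NNReal.mk (b^2) (sq_nonneg b)) y
            = gaussianPDF 0 1 y * gaussianPDF (a*y) (NNReal.mk (b^2) (sq_nonneg b)) x := by
          intro x
          simp only [gaussianPDF]
          rw [← ENNReal.ofReal_mul (gaussianPDFReal_nonneg _ _ _),
            ← ENNReal.ofReal_mul (gaussianPDFReal_nonneg _ _ _), pdf_symm hb hab]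
        simp_rw [hpt]
        rw [lintegral_const_mul _ (measurable_gaussianPDF _ _),
          lintegral_gaussianPDF_eq_one _ hv, mul_one]
    _ = (volume.withDensity (gaussianPDF 0 1)) s := (withDensity_apply _ hs).symm

end QAux2

namespace QAux3

lemma integrable_of_bounded_one {ρ : Measure ℝ} [IsProbabilityMeasure ρ] {f : ℝ → ℝ}
    (mf : Measurable f) (hf : ∀ x, ‖f x‖ ≤ 1) : Integrable f ρ :=
  ⟨mf.aestronglyMeasurable, HasFiniteIntegral.of_bounded (ae_of_all _ hf)⟩

lemma integral_mul_le {ρ : Measure ℝ} [IsProbabilityMeasure ρ] {g1 g2 h : ℝ → ℝ}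
    (mg1 : Measurable g1) (mg2 : Measurable g2) (mh : Measurable h)
    (bg1 : ∀ x, g1 x ∈ Icc (0:ℝ) 1) (bg2 : ∀ x, g2 x ∈ Icc (0:ℝ) 1)
    (bh : ∀ x, h x ∈ Icc (0:ℝ) 1)
    (hanti : Antitone h) (x0 : ℝ)
    (hc1 : ∀ x ≤ x0, g2 x ≤ g1 x) (hc2 : ∀ x, x0 ≤ x → g1 x ≤ g2 x)
    (heq : ∫ x, g1 x ∂ρ = ∫ x, g2 x ∂ρ) :
    ∫ x, g2 x * h x ∂ρ ≤ ∫ x, g1 x * h x ∂ρ := by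
  have nb : ∀ {f : ℝ → ℝ}, (∀ x, f x ∈ Icc (0:ℝ) 1) → ∀ x, ‖f x‖ ≤ 1 := by
    intro f hf x
    rw [Real.norm_eq_abs, abs_le]
    exact ⟨by linarith [(hf x).1], (hf x).2⟩
  have bmul : ∀ {f g : ℝ → ℝ}, (∀ x, f x ∈ Icc (0:ℝ) 1) → (∀ x, g x ∈ Icc (0:ℝ) 1) →
      ∀ x, ‖f x * g x‖ ≤ 1 := by
    intro f g hf hg x
    rw [norm_mul]
    calc ‖f x‖ * ‖g x‖ ≤ 1 * 1 := by
          apply mul_le_mul (nb hf x) (nb hg x) (norm_nonneg _) zero_le_one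
      _ = 1 := one_mul 1
  have i1 : Integrable (fun x => g1 x * h x) ρ :=
    integrable_of_bounded_one (mg1.mul mh) (bmul bg1 bh)
  have i2 : Integrable (fun x => g2 x * h x) ρ :=
    integrable_of_bounded_one (mg2.mul mh) (bmul bg2 bh)
  have ig1 : Integrable g1 ρ := integrable_of_bounded_one mg1 (nb bg1)
  have ig2 : Integrable g2 ρ := integrable_of_bounded_one mg2 (nb bg2)
  have key : ∫ x, (g2 x - g1 x) * (h x - h x0) ∂ρ ≤ 0 := by
    apply integral_nonpos
    intro x
    rcases le_total x x0 with hx | hx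
    · exact mul_nonpos_of_nonpos_of_nonneg (by linarith [hc1 x hx])
        (by linarith [hanti hx])
    · exact mul_nonpos_of_nonneg_of_nonpos (by linarith [hc2 x hx])
        (by linarith [hanti hx])
  have expand : ∫ x, (g2 x - g1 x) * (h x - h x0) ∂ρ
      = (∫ x, g2 x * h x ∂ρ) - (∫ x, g1 x * h x ∂ρ)
        - (((∫ x, g2 x ∂ρ) - (∫ x, g1 x ∂ρ)) * h x0) := by
    have e : ∀ x, (g2 x - g1 x) * (h x - h x0)
        = g2 x * h x - g1 x * h x - (g2 x * h x0 - g1 x * h x0) := by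
      intro x; ring
    simp_rw [e]
    have A : Integrable (fun x => g2 x * h x - g1 x * h x) ρ := i2.sub i1
    have B : Integrable (fun x => g2 x * h x0 - g1 x * h x0) ρ :=
      (ig2.mul_const _).sub (ig1.mul_const _)
    rw [integral_sub A B,
      integral_sub i2 i1, integral_sub (ig2.mul_const _) (ig1.mul_const _),
      integral_mul_const, integral_mul_const]
    ring
  rw [expand, heq] at key
  linarith

noncomputable def gr (c w x : ℝ) : ℝ :=
  ((gaussianReal 0 1) (Ioi ((c - Real.sqrt w * x)/Real.sqrt (1-w)))).toReal

noncomputable def hr (c' x : ℝ) : ℝ :=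
  ((gaussianReal 0 1) (Ici (x - c'))).toReal

lemma toReal_mono_meas {s t : Set ℝ} (hst : s ⊆ t) :
    ((gaussianReal 0 1) s).toReal ≤ ((gaussianReal 0 1) t).toReal :=
  ENNReal.toReal_mono (measure_ne_top _ _) (measure_mono hst)

lemma gr_mem_Icc (c w x : ℝ) : gr c w x ∈ Icc (0:ℝ) 1 :=
  ⟨ENNReal.toReal_nonneg, by
    rw [gr, ← ENNReal.toReal_one]
    exact ENNReal.toReal_mono ENNReal.one_ne_top prob_le_one⟩

lemma hr_mem_Icc (c' x : ℝ) : hr c' x ∈ Icc (0:ℝ) 1 :=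
  ⟨ENNReal.toReal_nonneg, by
    rw [hr, ← ENNReal.toReal_one]
    exact ENNReal.toReal_mono ENNReal.one_ne_top prob_le_one⟩

lemma gr_monotone (c : ℝ) {w : ℝ} (hw : w ∈ Ioo (0:ℝ) 1) : Monotone (gr c w) := by
  intro x y hxy
  apply toReal_mono_meas
  apply Ioi_subset_Ioi
  have hb : (0:ℝ) < Real.sqrt (1-w) := Real.sqrt_pos.mpr (by linarith [hw.2])
  rw [div_le_div_iff₀ hb hb]
  nlinarith [mul_le_mul_of_nonneg_left hxy (Real.sqrt_nonneg w)]

lemma hr_antitone (c' : ℝ) : Antitone (hr c') := by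
  intro x y hxy
  apply toReal_mono_meas
  exact Ici_subset_Ici.mpr (by linarith)

lemma gr_measurable (c : ℝ) {w : ℝ} (hw : w ∈ Ioo (0:ℝ) 1) : Measurable (gr c w) :=
  (gr_monotone c hw).measurable

lemma hr_measurable (c' : ℝ) : Measurable (hr c') :=
  (hr_antitone c').measurable

lemma gr_crossing (c : ℝ) {w1 w2 : ℝ} (hw1 : w1 ∈ Ioo (0:ℝ) 1) (hw2 : w2 ∈ Ioo (0:ℝ) 1)
    (h12 : w1 < w2) :
    ∃ x0 : ℝ, (∀ x ≤ x0, gr c w2 x ≤ gr c w1 x) ∧ (∀ x, x0 ≤ x → gr c w1 x ≤ gr c w2 x) := by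
  set a1 := Real.sqrt w1 with ha1
  set a2 := Real.sqrt w2 with ha2
  set b1 := Real.sqrt (1 - w1) with hb1
  set b2 := Real.sqrt (1 - w2) with hb2
  have ha1p : 0 < a1 := Real.sqrt_pos.mpr hw1.1
  have ha2p : 0 < a2 := Real.sqrt_pos.mpr hw2.1
  have hb1p : 0 < b1 := Real.sqrt_pos.mpr (by linarith [hw1.2])
  have hb2p : 0 < b2 := Real.sqrt_pos.mpr (by linarith [hw2.2])
  have ha12 : a1 < a2 := Real.sqrt_lt_sqrt hw1.1.le h12
  have hb21 : b2 < b1 := Real.sqrt_lt_sqrt (by linarith [hw2.2]) (by linarith)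
  have hD : 0 < b1 * a2 - a1 * b2 := by nlinarith
  refine ⟨(b1 - b2) * c / (b1 * a2 - a1 * b2), ?_, ?_⟩
  · intro x hx
    have hx' : x * (b1 * a2 - a1 * b2) ≤ (b1 - b2) * c := (le_div_iff₀ hD).mp hx
    apply toReal_mono_meas
    apply Ioi_subset_Ioi
    rw [div_le_div_iff₀ hb1p hb2p]
    nlinarith
  · intro x hx
    have hx' : (b1 - b2) * c ≤ x * (b1 * a2 - a1 * b2) := (div_le_iff₀ hD).mp hx
    apply toReal_mono_meas
    apply Ioi_subset_Ioi
    rw [div_le_div_iff₀ hb2p hb1p]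
    nlinarith

end QAux3

namespace QMain
open QAux QAux2 QAux3

lemma gr_integral_const (c : ℝ) {w : ℝ} (hw : w ∈ Set.Ioo (0:ℝ) 1) :
    ∫ x, gr c w x ∂(gaussianReal 0 1) = ((gaussianReal 0 1) (Ioi c)).toReal := by
  have hb : (0:ℝ) < Real.sqrt (1-w) := Real.sqrt_pos.mpr (by linarith [hw.2])
  have hab : (Real.sqrt w)^2 + (Real.sqrt (1-w))^2 = 1 := by
    rw [Real.sq_sqrt hw.1.le, Real.sq_sqrt (by linarith [hw.2])]
    ring
  have hFeq : (fun x => (gaussianReal 0 1) (Ioi ((c - Real.sqrt w * x)/Real.sqrt (1-w))))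
      = fun x => ENNReal.ofReal (gr c w x) := by
    funext x
    rw [gr, ENNReal.ofReal_toReal (measure_ne_top _ _)]
  have hFm : AEMeasurable
      (fun x => (gaussianReal 0 1) (Ioi ((c - Real.sqrt w * x)/Real.sqrt (1-w))))
      (gaussianReal 0 1) := by
    rw [hFeq]
    exact ((gr_measurable c hw).ennreal_ofReal).aemeasurable
  have h1 : ∫ x, gr c w x ∂(gaussianReal 0 1)
      = (∫⁻ x, (gaussianReal 0 1) (Ioi ((c - Real.sqrt w * x)/Real.sqrt (1-w)))
          ∂(gaussianReal 0 1)).toReal := by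
    rw [← integral_toReal hFm (ae_of_all _ fun x => measure_lt_top _ _)]
    rfl
  rw [h1]
  congr 1
  calc ∫⁻ x, (gaussianReal 0 1) (Ioi ((c - Real.sqrt w * x)/Real.sqrt (1-w)))
        ∂(gaussianReal 0 1)
      = ∫⁻ x, gaussianReal (Real.sqrt w * x)
          (NNReal.mk ((Real.sqrt (1-w))^2) (sq_nonneg _)) (Ioi c) ∂(gaussianReal 0 1) := by
        congr 1; funext x
        exact gauss_halfplane (Real.sqrt w) (Real.sqrt (1-w)) x c hb
    _ = gaussianReal 0 1 (Ioi c) := lintegral_gauss_smooth hb hab measurableSet_Ioi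

variable {Ω : Type*} [MeasurableSpace Ω]

lemma repr (μ : Measure Ω) [IsProbabilityMeasure μ]
    (Z1 Z2 Z3 : Ω → ℝ) (hZm : ∀ i, Measurable (![Z1, Z2, Z3] i))
    (hZ : ∀ i, μ.map (![Z1, Z2, Z3] i) = gaussianReal 0 1)
    (hindep : iIndepFun ![Z1, Z2, Z3] μ)
    (c c' : ℝ) {w : ℝ} (hw : w ∈ Set.Ioo (0:ℝ) 1) :
    μ ({ω | Real.sqrt w * Z1 ω + Real.sqrt (1 - w) * Z2 ω > c} ∩ {ω | Z1 ω ≤ Z3 ω + c'})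
      = ∫⁻ x, (gaussianReal 0 1) (Ioi ((c - Real.sqrt w * x)/Real.sqrt (1-w)))
          * (gaussianReal 0 1) (Ici (x - c')) ∂(gaussianReal 0 1) := by
  have hb : (0:ℝ) < Real.sqrt (1-w) := Real.sqrt_pos.mpr (by linarith [hw.2])
  have hZ1 : Measurable Z1 := by simpa using hZm 0
  have hZ2 : Measurable Z2 := by simpa using hZm 1
  have hZ3 : Measurable Z3 := by simpa using hZm 2
  have hm1 : μ.map Z1 = gaussianReal 0 1 := by simpa using hZ 0
  have hm2 : μ.map Z2 = gaussianReal 0 1 := by simpa using hZ 1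
  have hm3 : μ.map Z3 = gaussianReal 0 1 := by simpa using hZ 2
  have h23 : IndepFun Z2 Z3 μ := by
    simpa using hindep.indepFun (show (1:Fin 3) ≠ 2 by decide)
  have hmap23 : μ.map (fun ω => (Z2 ω, Z3 ω))
      = (gaussianReal 0 1).prod (gaussianReal 0 1) := by
    rw [(indepFun_iff_map_prod_eq_prod_map_map hZ2.aemeasurable hZ3.aemeasurable).mp h23,
      hm2, hm3]
  have h123 : IndepFun Z1 (fun ω => (Z2 ω, Z3 ω)) μ := by
    have := hindep.indepFun_prodMk hZm 1 2 0 (by decide) (by decide)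
    simpa using this.symm
  have hmapT : μ.map (fun ω => (Z1 ω, (Z2 ω, Z3 ω)))
      = (gaussianReal 0 1).prod ((gaussianReal 0 1).prod (gaussianReal 0 1)) := by
    rw [(indepFun_iff_map_prod_eq_prod_map_map hZ1.aemeasurable
      (hZ2.prodMk hZ3).aemeasurable).mp h123, hm1, hmap23]
  set S : Set (ℝ × ℝ × ℝ) :=
    {p | Real.sqrt w * p.1 + Real.sqrt (1-w) * p.2.1 > c ∧ p.1 ≤ p.2.2 + c'} with hSdef
  have hS : MeasurableSet S := by
    have : S = {p : ℝ × ℝ × ℝ | c < Real.sqrt w * p.1 + Real.sqrt (1-w) * p.2.1}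
        ∩ {p : ℝ × ℝ × ℝ | p.1 ≤ p.2.2 + c'} := rfl
    rw [this]
    exact (measurableSet_lt measurable_const (by fun_prop)).inter
      (measurableSet_le (by fun_prop) (by fun_prop))
  have hT : Measurable (fun ω => (Z1 ω, (Z2 ω, Z3 ω))) := hZ1.prodMk (hZ2.prodMk hZ3)
  have hpre : (fun ω => (Z1 ω, (Z2 ω, Z3 ω))) ⁻¹' S
      = {ω | Real.sqrt w * Z1 ω + Real.sqrt (1 - w) * Z2 ω > c} ∩ {ω | Z1 ω ≤ Z3 ω + c'} := rfl
  rw [← hpre, ← Measure.map_apply hT hS, hmapT, Measure.prod_apply hS]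
  congr 1
  funext x
  have hslice : Prod.mk x ⁻¹' S
      = (Ioi ((c - Real.sqrt w * x)/Real.sqrt (1-w))) ×ˢ (Ici (x - c')) := by
    ext ⟨y, z⟩
    simp only [hSdef, mem_preimage, Set.mem_prod, mem_Ioi, mem_Ici, mem_setOf_eq, gt_iff_lt]
    constructor
    · rintro ⟨h1, h2⟩
      refine ⟨?_, by linarith⟩
      rw [div_lt_iff₀ hb]
      nlinarith
    · rintro ⟨h1, h2⟩
      rw [div_lt_iff₀ hb] at h1
      exact ⟨by nlinarith, by linarith⟩
  rw [hslice, Measure.prod_prod]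

end QMain

open QAux QAux2 QAux3 QMain in
/-- Lemma 1: `Q(w) = P(√w Z₁ + √(1-w) Z₂ > c ∣ Z₁ ≤ Z₃ + c')` is monotonically
decreasing in `w` on `(0,1)`, for mutually independent standard normal `Z₁, Z₂, Z₃`. -/
theorem Q_antitoneOn {Ω : Type*} [MeasurableSpace Ω]
    (μ : Measure Ω) [IsProbabilityMeasure μ]
    (Z1 Z2 Z3 : Ω → ℝ) (hZm : ∀ i, Measurable (![Z1, Z2, Z3] i))
    (hZ : ∀ i, μ.map (![Z1, Z2, Z3] i) = gaussianReal 0 1)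
    (hindep : iIndepFun ![Z1, Z2, Z3] μ)
    (c c' : ℝ) :
    AntitoneOn
      (fun w : ℝ =>
        ((μ[|{ω | Z1 ω ≤ Z3 ω + c'}])
            {ω | Real.sqrt w * Z1 ω + Real.sqrt (1 - w) * Z2 ω > c}).toReal)
      (Set.Ioo (0 : ℝ) 1) := by
  intro w1 hw1 w2 hw2 h12
  have hZ1 : Measurable Z1 := by simpa using hZm 0
  have hZ3 : Measurable Z3 := by simpa using hZm 2
  have hm1 : μ.map Z1 = gaussianReal 0 1 := by simpa using hZ 0
  have hm3 : μ.map Z3 = gaussianReal 0 1 := by simpa using hZ 2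
  set A := {ω | Z1 ω ≤ Z3 ω + c'} with hAdef
  have hA : MeasurableSet A := measurableSet_le hZ1 (hZ3.add_const _)
  -- the conditional probability in terms of real integrals
  have hQ : ∀ w ∈ Set.Ioo (0:ℝ) 1,
      ((μ[|A]) {ω | Real.sqrt w * Z1 ω + Real.sqrt (1 - w) * Z2 ω > c}).toReal
        = (μ A)⁻¹.toReal * ∫ x, gr c w x * hr c' x ∂(gaussianReal 0 1) := by
    intro w hw
    rw [cond_apply hA, ENNReal.toReal_mul]
    congr 1
    rw [Set.inter_comm, repr μ Z1 Z2 Z3 hZm hZ hindep c c' hw]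
    have hFH : (fun x => (gaussianReal 0 1) (Ioi ((c - Real.sqrt w * x)/Real.sqrt (1-w)))
        * (gaussianReal 0 1) (Ici (x - c')))
        = fun x => ENNReal.ofReal (gr c w x) * ENNReal.ofReal (hr c' x) := by
      funext x
      rw [gr, hr, ENNReal.ofReal_toReal (measure_ne_top _ _),
        ENNReal.ofReal_toReal (measure_ne_top _ _)]
    have hmeas : AEMeasurable (fun x => (gaussianReal 0 1)
        (Ioi ((c - Real.sqrt w * x)/Real.sqrt (1-w)))
        * (gaussianReal 0 1) (Ici (x - c'))) (gaussianReal 0 1) := by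
      rw [hFH]
      exact (((gr_measurable c hw).ennreal_ofReal).mul
        ((hr_measurable c').ennreal_ofReal)).aemeasurable
    have hlt : ∀ x, (gaussianReal 0 1) (Ioi ((c - Real.sqrt w * x)/Real.sqrt (1-w)))
        * (gaussianReal 0 1) (Ici (x - c')) < ⊤ := by
      intro x
      calc (gaussianReal 0 1) (Ioi ((c - Real.sqrt w * x)/Real.sqrt (1-w)))
          * (gaussianReal 0 1) (Ici (x - c')) ≤ 1 * 1 := mul_le_mul' prob_le_one prob_le_one
        _ < ⊤ := by simp
    rw [← integral_toReal hmeas (ae_of_all _ hlt)]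
    congr 1
    funext x
    rw [ENNReal.toReal_mul]
    rfl
  have goal2 : ∫ x, gr c w2 x * hr c' x ∂(gaussianReal 0 1)
      ≤ ∫ x, gr c w1 x * hr c' x ∂(gaussianReal 0 1) := by
    rcases eq_or_lt_of_le h12 with rfl | hlt
    · exact le_refl _
    · obtain ⟨x0, hc1, hc2⟩ := gr_crossing c hw1 hw2 hlt
      exact integral_mul_le (gr_measurable c hw1) (gr_measurable c hw2) (hr_measurable c')
        (fun x => gr_mem_Icc c w1 x) (fun x => gr_mem_Icc c w2 x) (fun x => hr_mem_Icc c' x)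
        (hr_antitone c') x0 hc1 hc2
        (by rw [gr_integral_const c hw1, gr_integral_const c hw2])
  simp only []
  rw [hQ w1 hw1, hQ w2 hw2]
  exact mul_le_mul_of_nonneg_left goal2 ENNReal.toReal_nonneg
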